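/- Fix q ∈ ℝ with 0 < q < 1 and nonzero A, B, C, D, λ ∈ ℂ with |ADλ| < 1, and assume (BCDλ;q)_m ≠ 0 and (ABCλ;q)_m ≠ 0 for all m ≥ 0. For n ≥ 0 let X_n = λⁿ · (A;q)_n (B;q)_n (C;q)_n (D;q)_n / ((BCDλ;q)_n (ABCλ;q)_n) · ₃φ₂(BCλ, Bqⁿ, Cqⁿ; BCDλqⁿ, ABCλqⁿ; q, ADλ). Then lim_{n→∞} X_n / λⁿ = (A;q)_∞ (B;q)_∞ (C;q)_∞ (D;q)_∞ (ABCDλ²;q)_∞ / ((BCDλ;q)_∞ (ABCλ;q)_∞ (ADλ;q)_∞). -/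

import Mathlib

open Filter

noncomputable def qp (q a : ℂ) (n : ℕ) : ℂ := ∏ j ∈ Finset.range n, (1 - a * q ^ j)
noncomputable def qpInf (q a : ℂ) : ℂ := ∏' j : ℕ, (1 - a * q ^ j)
noncomputable def phi32 (q a b c d e w : ℂ) : ℂ :=
  ∑' k : ℕ, (qp q a k * qp q b k * qp q c k) / (qp q d k * qp q e k * qp q q k) * w ^ k
noncomputable def phi21 (q a b c w : ℂ) : ℂ :=
  ∑' k : ℕ, (qp q a k * qp q b k) / (qp q c k * qp q q k) * w ^ k
noncomputable def phi11 (q a b w : ℂ) : ℂ :=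
  ∑' k : ℕ, qp q a k / (qp q b k * qp q q k) * (-1) ^ k * q ^ (k * (k - 1) / 2) * w ^ k

noncomputable def Prec {K : Type*} [Field K] (a b2 : ℕ → K) (z : K) : ℕ → K
  | 0 => 1
  | 1 => z - a 0
  | n + 2 => (z - a (n + 1)) * Prec a b2 z (n + 1) - b2 (n + 1) * Prec a b2 z n

noncomputable def aCDH (q A B C D : ℂ) (n : ℕ) : ℂ :=
  (1 / A + 1 / B + 1 / C + 1 / D) * q ^ (n : ℤ) - (1 + q) * q ^ (2 * (n : ℤ) - 1)

noncomputable def bCDH (q A B C D : ℂ) (n : ℕ) : ℂ :=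
  q / (A * B * C * D) * (1 - A * q ^ ((n : ℤ) - 1)) * (1 - B * q ^ ((n : ℤ) - 1)) *
    (1 - C * q ^ ((n : ℤ) - 1)) * (1 - D * q ^ ((n : ℤ) - 1))

/-- `X` solves the associated continuous dual `q`-Hahn recurrence
`X_{n+1} - (z - a_n) X_n + b_n² X_{n-1} = 0` for `n ≥ 1`. -/
def SolvesCDH (q A B C D z : ℂ) (X : ℕ → ℂ) : Prop :=
  ∀ n : ℕ, 1 ≤ n →
    X (n + 1) - (z - aCDH q A B C D n) * X n + bCDH q A B C D n * X (n - 1) = 0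

section aux
variable {q : ℝ} (hq0 : 0 < q) (hq1 : q < 1)

lemma qp_succ (Q a : ℂ) (n : ℕ) : qp Q a (n + 1) = qp Q a n * (1 - a * Q ^ n) :=
  Finset.prod_range_succ _ _

lemma qp_zero (Q a : ℂ) : qp Q a 0 = 1 := rfl

lemma qp_zero_arg (Q : ℂ) (k : ℕ) : qp Q 0 k = 1 := by simp [qp]

include hq0 in
lemma norm_q_cast : ‖((q : ℝ) : ℂ)‖ = q := by
  rw [Complex.norm_real, Real.norm_eq_abs, abs_of_pos hq0]

include hq0 hq1 in
lemma sum_q_pow_le (k : ℕ) : ∑ j ∈ Finset.range k, q ^ j ≤ 1 / (1 - q) := by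
  have h := geom_sum_eq (ne_of_lt hq1) k
  have h2 : (q ^ k - 1) / (q - 1) = (1 - q ^ k) / (1 - q) := by
    rw [div_eq_div_iff (by linarith) (by linarith)]; ring
  rw [h, h2]
  have hk : 0 ≤ q ^ k := by positivity
  gcongr
  · linarith

include hq0 hq1 in
lemma qp_norm_le (a : ℂ) (r : ℝ) (ha : ‖a‖ ≤ r) (k : ℕ) :
    ‖qp (q : ℂ) a k‖ ≤ Real.exp (r / (1 - q)) := by
  have hr : 0 ≤ r := le_trans (norm_nonneg a) ha
  have h1 : ‖qp (q : ℂ) a k‖ ≤ ∏ j ∈ Finset.range k, Real.exp (r * q ^ j) := by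
    rw [qp, norm_prod]
    apply Finset.prod_le_prod (fun j _ => norm_nonneg _)
    intro j _
    calc ‖1 - a * (q : ℂ) ^ j‖ ≤ ‖(1 : ℂ)‖ + ‖a * (q : ℂ) ^ j‖ := norm_sub_le _ _
      _ = 1 + ‖a‖ * q ^ j := by
          rw [norm_one, norm_mul, norm_pow, norm_q_cast hq0]
      _ ≤ 1 + r * q ^ j := by
          have : 0 ≤ q ^ j := by positivity
          nlinarith
      _ ≤ Real.exp (r * q ^ j) := by
          have := Real.add_one_le_exp (r * q ^ j); linarith
  calc ‖qp (q : ℂ) a k‖ ≤ ∏ j ∈ Finset.range k, Real.exp (r * q ^ j) := h1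
    _ = Real.exp (∑ j ∈ Finset.range k, r * q ^ j) := (Real.exp_sum _ _).symm
    _ ≤ Real.exp (r / (1 - q)) := by
        apply Real.exp_le_exp.2
        rw [← Finset.mul_sum]
        calc r * ∑ j ∈ Finset.range k, q ^ j ≤ r * (1 / (1 - q)) :=
              mul_le_mul_of_nonneg_left (sum_q_pow_le hq0 hq1 k) hr
          _ = r / (1 - q) := by ring

lemma exp_neg_le_one_sub {x r : ℝ} (hx : 0 ≤ x) (hxr : x ≤ r) (hr : r < 1) :
    Real.exp (-(x / (1 - r))) ≤ 1 - x := by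
  have h1r : 0 < 1 - r := by linarith
  have hy : 0 ≤ x / (1 - r) := div_nonneg hx h1r.le
  have h2 := Real.add_one_le_exp (x / (1 - r))
  have h3 : Real.exp (-(x / (1 - r))) = (Real.exp (x / (1 - r)))⁻¹ := Real.exp_neg _
  rw [h3]
  have hpos : (0:ℝ) < 1 + x / (1 - r) := by linarith
  have h4 : (Real.exp (x / (1 - r)))⁻¹ ≤ (1 + x / (1 - r))⁻¹ := by
    apply inv_anti₀ hpos; linarith
  refine le_trans h4 ?_
  rw [inv_le_iff_one_le_mul₀ hpos]
  have hx1 : 0 < 1 - x := by linarith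
  have : (1 - x) * (1 + x / (1 - r)) = 1 + x * (r - x) / (1 - r) := by
    field_simp; ring
  rw [this]
  have : 0 ≤ x * (r - x) / (1 - r) := by
    apply div_nonneg _ h1r.le
    nlinarith
  linarith

include hq0 hq1 in
lemma qp_norm_ge (a : ℂ) (r : ℝ) (ha : ‖a‖ ≤ r) (hr : r < 1) (k : ℕ) :
    Real.exp (-(r / ((1 - q) * (1 - r)))) ≤ ‖qp (q : ℂ) a k‖ := by
  have hr0 : 0 ≤ r := le_trans (norm_nonneg a) ha
  have h1 : ∀ j : ℕ, Real.exp (-(r * q ^ j / (1 - r))) ≤ ‖1 - a * (q : ℂ) ^ j‖ := by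
    intro j
    have hqj : q ^ j ≤ 1 := pow_le_one₀ hq0.le hq1.le
    have hxr : r * q ^ j ≤ r := by nlinarith
    have hx0 : 0 ≤ r * q ^ j := by positivity
    calc Real.exp (-(r * q ^ j / (1 - r))) ≤ 1 - r * q ^ j :=
          exp_neg_le_one_sub hx0 hxr hr
      _ ≤ 1 - ‖a * (q : ℂ) ^ j‖ := by
          have : ‖a * (q : ℂ) ^ j‖ = ‖a‖ * q ^ j := by
            rw [norm_mul, norm_pow, norm_q_cast hq0]
          rw [this]
          have : 0 ≤ q ^ j := by positivity
          nlinarith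
      _ ≤ ‖1 - a * (q : ℂ) ^ j‖ := by
          have := norm_sub_norm_le (1 : ℂ) (a * (q : ℂ) ^ j)
          simpa using this
  calc Real.exp (-(r / ((1 - q) * (1 - r))))
      ≤ Real.exp (∑ j ∈ Finset.range k, -(r * q ^ j / (1 - r))) := by
        apply Real.exp_le_exp.2
        have e1 : ∑ j ∈ Finset.range k, -(r * q ^ j / (1 - r)) =
            -((∑ j ∈ Finset.range k, r * q ^ j) / (1 - r)) := by
          rw [Finset.sum_div, Finset.sum_neg_distrib]
        rw [e1]
        apply neg_le_neg
        rw [show r / ((1 - q) * (1 - r)) = (r / (1 - q)) / (1 - r) by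
          rw [div_div]]
        have : ∑ j ∈ Finset.range k, r * q ^ j ≤ r / (1 - q) := by
          rw [← Finset.mul_sum]
          calc r * ∑ j ∈ Finset.range k, q ^ j ≤ r * (1 / (1 - q)) :=
                mul_le_mul_of_nonneg_left (sum_q_pow_le hq0 hq1 k) hr0
            _ = r / (1 - q) := by ring
        gcongr
    _ = ∏ j ∈ Finset.range k, Real.exp (-(r * q ^ j / (1 - r))) := Real.exp_sum _ _
    _ ≤ ‖qp (q : ℂ) a k‖ := by
        rw [qp, norm_prod]
        exact Finset.prod_le_prod (fun j _ => (Real.exp_pos _).le) (fun j _ => h1 j)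

include hq0 hq1 in
lemma qp_multipliable (a : ℂ) : Multipliable (fun j : ℕ => 1 - a * (q : ℂ) ^ j) := by
  by_cases hz : ∃ j : ℕ, 1 - a * (q : ℂ) ^ j = 0
  · obtain ⟨j0, hj0⟩ := hz
    refine ⟨0, ?_⟩
    rw [HasProd]
    apply Tendsto.congr' _ tendsto_const_nhds
    filter_upwards [Filter.eventually_atTop.2 ⟨{j0}, fun s hs => hs⟩] with s hs
    exact (Finset.prod_eq_zero (hs (Finset.mem_singleton_self j0)) hj0).symm
  · push_neg at hz
    have hlog : Summable fun j : ℕ => Complex.log (1 - a * (q : ℂ) ^ j) := by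
      apply Summable.of_norm_bounded_eventually_nat (g := fun j => 3 / 2 * (‖a‖ * q ^ j))
      · apply Summable.mul_left
        apply Summable.mul_left
        exact summable_geometric_of_lt_one hq0.le hq1
      · have htend : Tendsto (fun j : ℕ => ‖a‖ * q ^ j) atTop (nhds 0) := by
          have := tendsto_pow_atTop_nhds_zero_of_lt_one hq0.le hq1
          simpa using this.const_mul ‖a‖
        filter_upwards [htend.eventually_le_const (by norm_num : (0:ℝ) < 1/2)] with j hj
        have hn : ‖-(a * (q : ℂ) ^ j)‖ ≤ 1 / 2 := by
          rw [norm_neg, norm_mul, norm_pow, norm_q_cast hq0]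
          exact hj
        have := Complex.norm_log_one_add_half_le_self hn
        rw [show (1 : ℂ) + -(a * (q : ℂ) ^ j) = 1 - a * (q : ℂ) ^ j by ring] at this
        refine le_trans this ?_
        rw [norm_neg, norm_mul, norm_pow, norm_q_cast hq0]
    exact Complex.multipliable_of_summable_log hlog

include hq0 hq1 in
lemma qp_tendsto (a : ℂ) :
    Tendsto (fun n => qp (q : ℂ) a n) atTop (nhds (qpInf (q : ℂ) a)) :=
  (qp_multipliable hq0 hq1 a).hasProd.tendsto_prod_nat

include hq0 hq1 in
lemma qpInf_ne_zero_of_small (a : ℂ) (ha : ‖a‖ < 1) : qpInf (q : ℂ) a ≠ 0 := by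
  have hb : Real.exp (-(‖a‖ / ((1 - q) * (1 - ‖a‖)))) ≤ ‖qpInf (q : ℂ) a‖ := by
    apply ge_of_tendsto' ((qp_tendsto hq0 hq1 a).norm)
    exact fun n => qp_norm_ge hq0 hq1 a ‖a‖ le_rfl ha n
  intro h
  rw [h, norm_zero] at hb
  exact absurd hb (not_le.2 (Real.exp_pos _))

include hq0 hq1 in
lemma qpInf_ne_zero (a : ℂ) (h : ∀ m : ℕ, qp (q : ℂ) a m ≠ 0) :
    qpInf (q : ℂ) a ≠ 0 := by
  obtain ⟨N, hN⟩ : ∃ N : ℕ, ‖a‖ * q ^ N < 1 := by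
    have htend : Tendsto (fun j : ℕ => ‖a‖ * q ^ j) atTop (nhds 0) := by
      have := tendsto_pow_atTop_nhds_zero_of_lt_one hq0.le hq1
      simpa using this.const_mul ‖a‖
    exact (htend.eventually_lt_const (by norm_num : (0:ℝ) < 1)).exists
  have hsplit : ∀ n : ℕ, qp (q : ℂ) a (N + n) = qp (q : ℂ) a N * qp (q : ℂ) (a * (q : ℂ) ^ N) n := by
    intro n
    rw [qp, qp, qp, Finset.prod_range_add]
    congr 1
    apply Finset.prod_congr rfl
    intro i _
    rw [pow_add]
    ring
  have ht1 : Tendsto (fun n => qp (q : ℂ) a (N + n)) atTop (nhds (qpInf (q : ℂ) a)) :=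
    by
    have := (qp_tendsto hq0 hq1 a).comp (tendsto_add_atTop_nat N)
    exact this.congr (fun n => by simp [Function.comp, Nat.add_comm])
  have ht2 : Tendsto (fun n => qp (q : ℂ) a (N + n)) atTop
      (nhds (qp (q : ℂ) a N * qpInf (q : ℂ) (a * (q : ℂ) ^ N))) := by
    apply Tendsto.congr (fun n => (hsplit n).symm)
    exact (qp_tendsto hq0 hq1 (a * (q : ℂ) ^ N)).const_mul _
  have : qpInf (q : ℂ) a = qp (q : ℂ) a N * qpInf (q : ℂ) (a * (q : ℂ) ^ N) :=
    tendsto_nhds_unique ht1 ht2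
  rw [this]
  apply mul_ne_zero (h N)
  apply qpInf_ne_zero_of_small hq0 hq1
  rw [norm_mul, norm_pow, norm_q_cast hq0]
  exact hN

lemma qp_continuous_arg (Q : ℂ) (k : ℕ) : Continuous (fun a : ℂ => qp Q a k) := by
  unfold qp
  apply continuous_finset_prod
  intro j _
  exact continuous_const.sub (continuous_id.mul continuous_const)

noncomputable def qbF (Q a z : ℂ) : ℂ := ∑' k : ℕ, qp Q a k / qp Q Q k * z ^ k

include hq0 hq1 in
lemma qp_q_ne_zero (k : ℕ) : qp (q : ℂ) (q : ℂ) k ≠ 0 := by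
  intro h
  have := qp_norm_ge hq0 hq1 (q : ℂ) q (le_of_eq (norm_q_cast hq0)) hq1 k
  rw [h, norm_zero] at this
  exact absurd this (not_le.2 (Real.exp_pos _))

include hq0 hq1 in
lemma one_sub_q_pow_ne_zero (m : ℕ) : (1 : ℂ) - (q : ℂ) * (q : ℂ) ^ m ≠ 0 := by
  intro h
  have h2 : (q : ℂ) * (q : ℂ) ^ m = 1 := by linear_combination -h
  have h3 : ‖(q : ℂ) * (q : ℂ) ^ m‖ = q * q ^ m := by
    rw [norm_mul, norm_pow, norm_q_cast hq0]
  rw [h2, norm_one] at h3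
  have hm : q ^ m ≤ 1 := pow_le_one₀ hq0.le hq1.le
  nlinarith [pow_pos hq0 m]

include hq0 hq1 in
lemma cqb_norm_le (a : ℂ) (k : ℕ) :
    ‖qp (q : ℂ) a k / qp (q : ℂ) (q : ℂ) k‖ ≤
      Real.exp (‖a‖ / (1 - q)) * Real.exp (q / ((1 - q) * (1 - q))) := by
  have hnum := qp_norm_le hq0 hq1 a ‖a‖ le_rfl k
  have hden := qp_norm_ge hq0 hq1 (q : ℂ) q (le_of_eq (norm_q_cast hq0)) hq1 k
  rw [norm_div]
  calc ‖qp (q : ℂ) a k‖ / ‖qp (q : ℂ) (q : ℂ) k‖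
      ≤ Real.exp (‖a‖ / (1 - q)) / Real.exp (-(q / ((1 - q) * (1 - q)))) :=
        div_le_div₀ (Real.exp_pos _).le hnum (Real.exp_pos _) hden
    _ = Real.exp (‖a‖ / (1 - q)) * Real.exp (q / ((1 - q) * (1 - q))) := by
        rw [Real.exp_neg]; field_simp

include hq0 hq1 in
lemma summable_qbF (a z : ℂ) (hz : ‖z‖ < 1) :
    Summable (fun k : ℕ => qp (q : ℂ) a k / qp (q : ℂ) (q : ℂ) k * z ^ k) := by
  apply Summable.of_norm_bounded
    (g := fun k => Real.exp (‖a‖ / (1 - q)) * Real.exp (q / ((1 - q) * (1 - q))) * ‖z‖ ^ k)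
  · exact (summable_geometric_of_lt_one (norm_nonneg z) hz).mul_left _
  · intro k
    rw [norm_mul, norm_pow]
    exact mul_le_mul_of_nonneg_right (cqb_norm_le hq0 hq1 a k) (by positivity)

include hq0 hq1 in
lemma cqb_rec (a : ℂ) (k : ℕ) :
    qp (q : ℂ) a (k + 1) / qp (q : ℂ) (q : ℂ) (k + 1) * (1 - (q : ℂ) * (q : ℂ) ^ k) =
      qp (q : ℂ) a k / qp (q : ℂ) (q : ℂ) k * (1 - a * (q : ℂ) ^ k) := by
  rw [qp_succ, qp_succ]
  have h1 := one_sub_q_pow_ne_zero hq0 hq1 k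
  have h2 := qp_q_ne_zero hq0 hq1 k
  rw [div_mul_eq_mul_div, div_mul_eq_mul_div, div_eq_div_iff (mul_ne_zero h2 h1) h2]
  ring

include hq0 hq1 in
lemma qbin_step (a z : ℂ) (hz : ‖z‖ < 1) :
    (1 - z) * qbF (q : ℂ) a z = (1 - a * z) * qbF (q : ℂ) a ((q : ℂ) * z) := by
  have hqz : ‖(q : ℂ) * z‖ < 1 := by
    rw [norm_mul, norm_q_cast hq0]
    nlinarith [norm_nonneg z]
  have s0 := summable_qbF hq0 hq1 a z hz
  have sq := summable_qbF hq0 hq1 a ((q : ℂ) * z) hqz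
  have sG : Summable (fun k : ℕ =>
      qp (q : ℂ) a k / qp (q : ℂ) (q : ℂ) k * (1 - (q : ℂ) ^ k) * z ^ k) := by
    apply (s0.sub sq).congr
    intro k
    ring
  have e1 : qbF (q : ℂ) a z - qbF (q : ℂ) a ((q : ℂ) * z) =
      ∑' k : ℕ, qp (q : ℂ) a k / qp (q : ℂ) (q : ℂ) k * (1 - (q : ℂ) ^ k) * z ^ k := by
    rw [qbF, qbF, ← Summable.tsum_sub s0 sq]
    exact tsum_congr (fun k => by ring)
  have e2 : z * qbF (q : ℂ) a z - a * z * qbF (q : ℂ) a ((q : ℂ) * z) =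
      ∑' k : ℕ, qp (q : ℂ) a k / qp (q : ℂ) (q : ℂ) k * (1 - a * (q : ℂ) ^ k) * z ^ (k + 1) := by
    rw [qbF, qbF, ← tsum_mul_left, ← tsum_mul_left,
      ← Summable.tsum_sub (s0.mul_left z) (sq.mul_left (a * z))]
    exact tsum_congr (fun k => by ring)
  have tG : (∑' k : ℕ, qp (q : ℂ) a k / qp (q : ℂ) (q : ℂ) k * (1 - (q : ℂ) ^ k) * z ^ k) =
      ∑' k : ℕ, qp (q : ℂ) a k / qp (q : ℂ) (q : ℂ) k * (1 - a * (q : ℂ) ^ k) * z ^ (k + 1) := by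
    rw [Summable.tsum_eq_zero_add sG]
    have h0 : qp (q : ℂ) a 0 / qp (q : ℂ) (q : ℂ) 0 * (1 - (q : ℂ) ^ 0) * z ^ 0 = 0 := by
      simp
    rw [h0, zero_add]
    apply tsum_congr
    intro k
    have := cqb_rec hq0 hq1 a k
    calc qp (q : ℂ) a (k + 1) / qp (q : ℂ) (q : ℂ) (k + 1) * (1 - (q : ℂ) ^ (k + 1)) * z ^ (k + 1)
        = qp (q : ℂ) a (k + 1) / qp (q : ℂ) (q : ℂ) (k + 1) * (1 - (q : ℂ) * (q : ℂ) ^ k) *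
            z ^ (k + 1) := by rw [pow_succ']
      _ = qp (q : ℂ) a k / qp (q : ℂ) (q : ℂ) k * (1 - a * (q : ℂ) ^ k) * z ^ (k + 1) := by
          rw [this]
  linear_combination e1 - e2 + tG

include hq0 hq1 in
lemma qbin_iter (a z : ℂ) (hz : ‖z‖ < 1) (n : ℕ) :
    qp (q : ℂ) z n * qbF (q : ℂ) a z =
      qp (q : ℂ) (a * z) n * qbF (q : ℂ) a ((q : ℂ) ^ n * z) := by
  induction n with
  | zero => simp [qp]
  | succ n ih =>
    have hzn : ‖(q : ℂ) ^ n * z‖ < 1 := by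
      rw [norm_mul, norm_pow, norm_q_cast hq0]
      have h1 : q ^ n ≤ 1 := pow_le_one₀ hq0.le hq1.le
      nlinarith [norm_nonneg z]
    have step := qbin_step hq0 hq1 a ((q : ℂ) ^ n * z) hzn
    rw [show (q : ℂ) * ((q : ℂ) ^ n * z) = (q : ℂ) ^ (n + 1) * z by rw [pow_succ']; ring] at step
    rw [qp_succ, qp_succ]
    linear_combination (1 - z * (q : ℂ) ^ n) * ih + qp (q : ℂ) (a * z) n * step

include hq0 hq1 in
lemma qbF_tendsto_one (a z : ℂ) (hz : ‖z‖ < 1) :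
    Tendsto (fun n : ℕ => qbF (q : ℂ) a ((q : ℂ) ^ n * z)) atTop (nhds 1) := by
  have key : Tendsto (fun n : ℕ => ∑' k : ℕ,
      qp (q : ℂ) a k / qp (q : ℂ) (q : ℂ) k * ((q : ℂ) ^ n * z) ^ k) atTop
      (nhds (∑' k : ℕ, qp (q : ℂ) a k / qp (q : ℂ) (q : ℂ) k * ((0 : ℂ) * z) ^ k)) := by
    apply tendsto_tsum_of_dominated_convergence
      (bound := fun k => Real.exp (‖a‖ / (1 - q)) * Real.exp (q / ((1 - q) * (1 - q))) * ‖z‖ ^ k)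
    · exact (summable_geometric_of_lt_one (norm_nonneg z) hz).mul_left _
    · intro k
      apply Tendsto.const_mul
      apply Tendsto.pow
      apply Tendsto.mul_const
      apply tendsto_pow_atTop_nhds_zero_of_norm_lt_one
      rw [norm_q_cast hq0]; exact hq1
    · apply Filter.Eventually.of_forall
      intro n k
      rw [norm_mul, norm_pow]
      apply mul_le_mul (cqb_norm_le hq0 hq1 a k) _ (by positivity) (by positivity)
      apply pow_le_pow_left₀ (norm_nonneg _)
      rw [norm_mul, norm_pow, norm_q_cast hq0]
      have h1 : q ^ n ≤ 1 := pow_le_one₀ hq0.le hq1.le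
      nlinarith [norm_nonneg z]
  have hval : (∑' k : ℕ, qp (q : ℂ) a k / qp (q : ℂ) (q : ℂ) k * ((0 : ℂ) * z) ^ k) = 1 := by
    rw [tsum_eq_single 0]
    · simp [qp]
    · intro k hk
      rw [zero_mul, zero_pow hk, mul_zero]
  rw [hval] at key
  exact key.congr (fun n => rfl)

include hq0 hq1 in
lemma qbin (a z : ℂ) (hz : ‖z‖ < 1) :
    qbF (q : ℂ) a z = qpInf (q : ℂ) (a * z) / qpInf (q : ℂ) z := by
  have h1 : Tendsto (fun n : ℕ => qp (q : ℂ) z n * qbF (q : ℂ) a z) atTop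
      (nhds (qpInf (q : ℂ) z * qbF (q : ℂ) a z)) :=
    (qp_tendsto hq0 hq1 z).mul_const _
  have h2 : Tendsto (fun n : ℕ => qp (q : ℂ) z n * qbF (q : ℂ) a z) atTop
      (nhds (qpInf (q : ℂ) (a * z) * 1)) := by
    apply Tendsto.congr (fun n => (qbin_iter hq0 hq1 a z hz n).symm)
    exact (qp_tendsto hq0 hq1 (a * z)).mul (qbF_tendsto_one hq0 hq1 a z hz)
  have h3 : qpInf (q : ℂ) z * qbF (q : ℂ) a z = qpInf (q : ℂ) (a * z) * 1 :=
    tendsto_nhds_unique h1 h2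
  rw [mul_one] at h3
  rw [eq_div_iff (qpInf_ne_zero_of_small hq0 hq1 z hz)]
  linear_combination h3

include hq0 hq1 in
lemma qp_arg_zero_tendsto (x : ℂ) (k : ℕ) :
    Tendsto (fun n : ℕ => qp (q : ℂ) (x * (q : ℂ) ^ n) k) atTop (nhds 1) := by
  have h0 : Tendsto (fun n : ℕ => x * (q : ℂ) ^ n) atTop (nhds 0) := by
    have hp : Tendsto (fun n : ℕ => (q : ℂ) ^ n) atTop (nhds 0) := by
      apply tendsto_pow_atTop_nhds_zero_of_norm_lt_one
      rw [norm_q_cast hq0]; exact hq1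
    simpa using hp.const_mul x
  have := ((qp_continuous_arg (q : ℂ) k).tendsto 0).comp h0
  rw [qp_zero_arg] at this
  exact this

include hq0 hq1 in
lemma phi32_tendsto (a b c d e w : ℂ) (hw : ‖w‖ < 1) :
    Tendsto (fun n : ℕ => phi32 (q : ℂ) a (b * (q : ℂ) ^ n) (c * (q : ℂ) ^ n)
        (d * (q : ℂ) ^ n) (e * (q : ℂ) ^ n) w) atTop (nhds (qbF (q : ℂ) a w)) := by
  set E : ℝ := Real.exp (‖a‖ / (1 - q)) * Real.exp (‖b‖ / (1 - q)) * Real.exp (‖c‖ / (1 - q)) /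
      (Real.exp (-((1:ℝ)/2 / ((1 - q) * (1 - 1/2)))) * Real.exp (-((1:ℝ)/2 / ((1 - q) * (1 - 1/2)))) *
        Real.exp (-(q / ((1 - q) * (1 - q))))) with hE
  have key : Tendsto (fun n : ℕ => ∑' k : ℕ,
      (qp (q : ℂ) a k * qp (q : ℂ) (b * (q : ℂ) ^ n) k * qp (q : ℂ) (c * (q : ℂ) ^ n) k) /
        (qp (q : ℂ) (d * (q : ℂ) ^ n) k * qp (q : ℂ) (e * (q : ℂ) ^ n) k * qp (q : ℂ) (q : ℂ) k) *
          w ^ k) atTop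
      (nhds (∑' k : ℕ, (qp (q : ℂ) a k * 1 * 1) / (1 * 1 * qp (q : ℂ) (q : ℂ) k) * w ^ k)) := by
    apply tendsto_tsum_of_dominated_convergence (bound := fun k => E * ‖w‖ ^ k)
    · exact (summable_geometric_of_lt_one (norm_nonneg w) hw).mul_left _
    · intro k
      apply Tendsto.mul_const
      apply Tendsto.div
      · exact (tendsto_const_nhds.mul (qp_arg_zero_tendsto hq0 hq1 b k)).mul
          (qp_arg_zero_tendsto hq0 hq1 c k)
      · exact ((qp_arg_zero_tendsto hq0 hq1 d k).mul
          (qp_arg_zero_tendsto hq0 hq1 e k)).mul_const _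
      · rw [one_mul, one_mul]
        exact qp_q_ne_zero hq0 hq1 k
    · have hqn : Tendsto (fun n : ℕ => q ^ n) atTop (nhds 0) :=
        tendsto_pow_atTop_nhds_zero_of_lt_one hq0.le hq1
      have hd2 : Tendsto (fun n : ℕ => ‖d‖ * q ^ n) atTop (nhds 0) := by
        simpa using hqn.const_mul ‖d‖
      have he2 : Tendsto (fun n : ℕ => ‖e‖ * q ^ n) atTop (nhds 0) := by
        simpa using hqn.const_mul ‖e‖
      filter_upwards [hd2.eventually_le_const (by norm_num : (0:ℝ) < 1/2),
        he2.eventually_le_const (by norm_num : (0:ℝ) < 1/2)] with n hdn hen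
      intro k
      have hqnle : q ^ n ≤ 1 := pow_le_one₀ hq0.le hq1.le
      have hxq : ∀ x : ℂ, ‖x * (q : ℂ) ^ n‖ = ‖x‖ * q ^ n := by
        intro x; rw [norm_mul, norm_pow, norm_q_cast hq0]
      have hbn : ‖b * (q : ℂ) ^ n‖ ≤ ‖b‖ := by
        rw [hxq]; nlinarith [norm_nonneg b, pow_nonneg hq0.le n]
      have hcn : ‖c * (q : ℂ) ^ n‖ ≤ ‖c‖ := by
        rw [hxq]; nlinarith [norm_nonneg c, pow_nonneg hq0.le n]
      have hdn' : ‖d * (q : ℂ) ^ n‖ ≤ 1/2 := by rw [hxq]; exact hdn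
      have hen' : ‖e * (q : ℂ) ^ n‖ ≤ 1/2 := by rw [hxq]; exact hen
      simp only [norm_mul, norm_div, norm_pow]
      rw [hE]
      gcongr
      · exact qp_norm_le hq0 hq1 a ‖a‖ le_rfl k
      · exact qp_norm_le hq0 hq1 _ ‖b‖ hbn k
      · exact qp_norm_le hq0 hq1 _ ‖c‖ hcn k
      · exact qp_norm_ge hq0 hq1 _ (1/2) hdn' (by norm_num) k
      · exact qp_norm_ge hq0 hq1 _ (1/2) hen' (by norm_num) k
      · exact qp_norm_ge hq0 hq1 (q : ℂ) q (le_of_eq (norm_q_cast hq0)) hq1 k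
  have hval : (∑' k : ℕ, (qp (q : ℂ) a k * 1 * 1) / (1 * 1 * qp (q : ℂ) (q : ℂ) k) * w ^ k) =
      qbF (q : ℂ) a w := by
    rw [qbF]
    apply tsum_congr
    intro k
    rw [mul_one, mul_one, one_mul, one_mul]
  rw [hval] at key
  exact key.congr (fun n => rfl)

end aux


/-- Large-`n` asymptotics (2.23) of the solution `X_n^{(1)}`. -/
theorem stmt5 (q : ℝ) (hq0 : 0 < q) (hq1 : q < 1)
    (A B C D lam : ℂ) (hA : A ≠ 0) (hB : B ≠ 0) (hC : C ≠ 0) (hD : D ≠ 0) (hlam : lam ≠ 0)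
    (harg : ‖A * D * lam‖ < 1)
    (h1 : ∀ m : ℕ, qp q (B * C * D * lam) m ≠ 0)
    (h2 : ∀ m : ℕ, qp q (A * B * C * lam) m ≠ 0)
    (X : ℕ → ℂ)
    (hX : ∀ n : ℕ, X n =
      lam ^ n * (qp q A n * qp q B n * qp q C n * qp q D n) /
        (qp q (B * C * D * lam) n * qp q (A * B * C * lam) n) *
        phi32 q (B * C * lam) (B * (q : ℂ) ^ n) (C * (q : ℂ) ^ n)
          (B * C * D * lam * (q : ℂ) ^ n) (A * B * C * lam * (q : ℂ) ^ n) (A * D * lam)) :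
    Tendsto (fun n : ℕ => X n / lam ^ n) atTop
      (nhds (qpInf q A * qpInf q B * qpInf q C * qpInf q D *
          qpInf q (A * B * C * D * lam ^ 2) /
        (qpInf q (B * C * D * lam) * qpInf q (A * B * C * lam) * qpInf q (A * D * lam)))) := by
  have hw : ‖A * D * lam‖ < 1 := harg
  have hphi := phi32_tendsto hq0 hq1 (B * C * lam) B C (B * C * D * lam) (A * B * C * lam)
    (A * D * lam) hw
  have hRden : qpInf (q : ℂ) (B * C * D * lam) * qpInf (q : ℂ) (A * B * C * lam) ≠ 0 :=
    mul_ne_zero (qpInf_ne_zero hq0 hq1 _ h1) (qpInf_ne_zero hq0 hq1 _ h2)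
  have hR : Tendsto (fun n : ℕ => (qp (q : ℂ) A n * qp (q : ℂ) B n * qp (q : ℂ) C n *
      qp (q : ℂ) D n) / (qp (q : ℂ) (B * C * D * lam) n * qp (q : ℂ) (A * B * C * lam) n))
      atTop (nhds ((qpInf (q : ℂ) A * qpInf (q : ℂ) B * qpInf (q : ℂ) C * qpInf (q : ℂ) D) /
        (qpInf (q : ℂ) (B * C * D * lam) * qpInf (q : ℂ) (A * B * C * lam)))) := by
    apply Tendsto.div _ _ hRden
    · exact (((qp_tendsto hq0 hq1 A).mul (qp_tendsto hq0 hq1 B)).mul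
        (qp_tendsto hq0 hq1 C)).mul (qp_tendsto hq0 hq1 D)
    · exact (qp_tendsto hq0 hq1 _).mul (qp_tendsto hq0 hq1 _)
  have hcomb := hR.mul hphi
  have heq : ∀ n : ℕ, X n / lam ^ n =
      (qp (q : ℂ) A n * qp (q : ℂ) B n * qp (q : ℂ) C n * qp (q : ℂ) D n) /
        (qp (q : ℂ) (B * C * D * lam) n * qp (q : ℂ) (A * B * C * lam) n) *
        phi32 (q : ℂ) (B * C * lam) (B * (q : ℂ) ^ n) (C * (q : ℂ) ^ n)
          (B * C * D * lam * (q : ℂ) ^ n) (A * B * C * lam * (q : ℂ) ^ n) (A * D * lam) := by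
    intro n
    rw [hX n]
    have hl : (lam : ℂ) ^ n ≠ 0 := pow_ne_zero n hlam
    rw [div_eq_iff hl]
    ring
  have hconst : (qpInf (q : ℂ) A * qpInf (q : ℂ) B * qpInf (q : ℂ) C * qpInf (q : ℂ) D) /
        (qpInf (q : ℂ) (B * C * D * lam) * qpInf (q : ℂ) (A * B * C * lam)) *
        qbF (q : ℂ) (B * C * lam) (A * D * lam) =
      qpInf q A * qpInf q B * qpInf q C * qpInf q D * qpInf q (A * B * C * D * lam ^ 2) /
        (qpInf q (B * C * D * lam) * qpInf q (A * B * C * lam) * qpInf q (A * D * lam)) := by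
    rw [qbin hq0 hq1 (B * C * lam) (A * D * lam) hw,
      show B * C * lam * (A * D * lam) = A * B * C * D * lam ^ 2 by ring]
    rw [div_mul_div_comm]
  rw [← hconst]
  exact hcomb.congr (fun n => (heq n).symm)
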